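/- Let G = ⟨a₀,...,a_k | a_i^{q_i} = a_{i+1}^{r_{i+1}}, i = 0,...,k-1⟩ with all q_i, r_i nonzero, and let r₀ be a nonzero integer. Suppose gcd(q_j, r_i) = 1 whenever 0 ≤ i ≤ j ≤ k-1. Then the intersection ⟨a₀^{r₀}⟩ ∩ ⟨a_k⟩ is generated by a₀^{r₀ q₀ q₁ ⋯ q_{k-1}}. -/

import Mathlib

/-- The single defining relation `t a^m t⁻¹ a^{-n}` of the Baumslag-Solitar group
`BS(m,n)`, as a subset of the free group on `Bool` (with `false ↦ a`, `true ↦ t`). -/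
abbrev bsRels (m n : ℤ) : Set (FreeGroup Bool) :=
  {FreeGroup.of true * (FreeGroup.of false) ^ m * (FreeGroup.of true)⁻¹ *
    ((FreeGroup.of false) ^ n)⁻¹}

/-- The Baumslag-Solitar group `BS(m,n) = ⟨a, t ∣ t a^m t⁻¹ = a^n⟩`. -/
abbrev BS (m n : ℤ) := PresentedGroup (bsRels m n)

/-- The generator `a` of `BS(m,n)`. -/
def BS.a (m n : ℤ) : BS m n := PresentedGroup.of false

/-- The generator `t` of `BS(m,n)`. -/
def BS.t (m n : ℤ) : BS m n := PresentedGroup.of true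

/-- The Klein bottle group `K = ⟨u, v ∣ u² = v²⟩` (`true ↦ u`, `false ↦ v`). -/
abbrev KB := PresentedGroup
  ({FreeGroup.of true ^ 2 * (FreeGroup.of false ^ 2)⁻¹} : Set (FreeGroup Bool))

/-- The generator `u` of the Klein bottle group. -/
def KB.u : KB := PresentedGroup.of true

/-- The generator `v` of the Klein bottle group. -/
def KB.v : KB := PresentedGroup.of false
/-- The relations `a_i^{q_i} = a_{i+1}^{r_{i+1}}` (for `0 ≤ i ≤ k-1`) of the iterated
amalgam of copies of `ℤ` over a segment; here `r i` denotes the label `r_{i+1}` of the paper. -/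
abbrev segRels (k : ℕ) (q r : ℕ → ℤ) : Set (FreeGroup ℕ) :=
  {w | ∃ i, i < k ∧ w = (FreeGroup.of i) ^ (q i) * ((FreeGroup.of (i + 1)) ^ (r i))⁻¹}

/-- The group `⟨a₀, …, a_k ∣ a_i^{q_i} = a_{i+1}^{r_{i+1}}, 0 ≤ i ≤ k-1⟩`. -/
abbrev Seg (k : ℕ) (q r : ℕ → ℤ) := PresentedGroup (segRels k q r)

open Finset in
private lemma stmt8_key_div (k : ℕ) (q r : ℕ → ℤ) (hq : ∀ i, q i ≠ 0)
    (r0 m : ℤ) (c : ℕ → ℤ)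
    (hcop0 : ∀ j, j + 1 ≤ k → Int.gcd (q j) r0 = 1)
    (hcop : ∀ i j, i + 1 ≤ j → j + 1 ≤ k → Int.gcd (q j) (r i) = 1)
    (h0 : 0 < k → c 0 * q 0 = r0 * m)
    (hstep : ∀ j, j + 1 < k → c (j + 1) * q (j + 1) = c j * r j) :
    (∏ i ∈ Finset.range k, q i) ∣ m := by
  rcases Nat.eq_zero_or_pos k with hk | hk
  · simp [hk]
  have main : ∀ j, j < k → ∃ s, m = (∏ i ∈ range (j + 1), q i) * s ∧
      c j = r0 * (∏ i ∈ range j, r i) * s := by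
    intro j
    induction j with
    | zero =>
      intro hj
      have h := h0 hk
      have hco : IsCoprime (q 0) r0 := Int.isCoprime_iff_gcd_eq_one.mpr (hcop0 0 hj)
      have hdvd : q 0 ∣ m := hco.dvd_of_dvd_mul_left ⟨c 0, by linarith⟩
      obtain ⟨s, hs⟩ := hdvd
      refine ⟨s, by simpa using hs, ?_⟩
      apply mul_right_cancel₀ (hq 0)
      rw [h, hs]; ring
    | succ j ih =>
      intro hj
      obtain ⟨s, hm, hc⟩ := ih (by omega)
      have h := hstep j hj
      have hco : IsCoprime (q (j + 1)) (r0 * ∏ i ∈ range (j + 1), r i) := by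
        refine IsCoprime.mul_right
          (Int.isCoprime_iff_gcd_eq_one.mpr (hcop0 (j + 1) hj)) ?_
        exact IsCoprime.prod_right fun i hi =>
          Int.isCoprime_iff_gcd_eq_one.mpr
            (hcop i (j + 1) (mem_range.mp hi) hj)
      have hdvd : q (j + 1) ∣ s := by
        refine hco.dvd_of_dvd_mul_left ⟨c (j + 1), ?_⟩
        rw [prod_range_succ, mul_comm (q (j + 1)) (c (j + 1)), h, hc]; ring
      obtain ⟨s', hs'⟩ := hdvd
      refine ⟨s', ?_, ?_⟩
      · rw [hm, hs', prod_range_succ q (j + 1)]; ring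
      · apply mul_right_cancel₀ (hq (j + 1))
        rw [h, hc, hs', prod_range_succ r j]; ring
  obtain ⟨s, hm, -⟩ := main (k - 1) (by omega)
  exact ⟨s, by rwa [Nat.sub_add_cancel hk] at hm⟩

private lemma stmt8_rel (k : ℕ) (q r : ℕ → ℤ) {i : ℕ} (hi : i < k) :
    (PresentedGroup.of i : Seg k q r) ^ (q i) = (PresentedGroup.of (i + 1)) ^ (r i) := by
  have h2 : (QuotientGroup.mk' (Subgroup.normalClosure (segRels k q r)))
      (FreeGroup.of i ^ (q i) * ((FreeGroup.of (i + 1)) ^ (r i))⁻¹) = 1 :=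
    (QuotientGroup.eq_one_iff _).mpr (Subgroup.subset_normalClosure ⟨i, hi, rfl⟩)
  rw [map_mul, map_zpow, map_inv, map_zpow] at h2
  exact mul_inv_eq_one.mp h2

private lemma stmt8_chain (k : ℕ) (q r : ℕ → ℤ) :
    ∀ j, j ≤ k → (PresentedGroup.of 0 : Seg k q r) ^ (∏ i ∈ Finset.range j, q i) =
      (PresentedGroup.of j : Seg k q r) ^ (∏ i ∈ Finset.range j, r i) := by
  intro j
  induction j with
  | zero => simp
  | succ j ih =>
    intro hj
    have h1 := ih (by omega)
    rw [Finset.prod_range_succ, Finset.prod_range_succ, zpow_mul, h1, ← zpow_mul,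
      mul_comm (∏ i ∈ Finset.range j, r i) (q j), zpow_mul, stmt8_rel k q r (by omega : j < k),
      ← zpow_mul, mul_comm (r j)]

private def segV (k : ℕ) (q r : ℕ → ℤ) : Fin k → (ℕ → ℤ) := fun i =>
  (q i) • Pi.single (i : ℕ) (1 : ℤ) - (r i) • Pi.single ((i : ℕ) + 1) (1 : ℤ)

private def segS (k : ℕ) (q r : ℕ → ℤ) : Submodule ℤ (ℕ → ℤ) :=
  Submodule.span ℤ (Set.range (segV k q r))

private def segF (k : ℕ) (q r : ℕ → ℤ) : ℕ → Multiplicative ((ℕ → ℤ) ⧸ segS k q r) :=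
  fun n => Multiplicative.ofAdd (Submodule.Quotient.mk (Pi.single n (1 : ℤ)))

private lemma segF_rel (k : ℕ) (q r : ℕ → ℤ) :
    ∀ w ∈ segRels k q r, (FreeGroup.lift (segF k q r)) w = 1 := by
  rintro w ⟨i, hi, rfl⟩
  have hmem : ((q i) • Pi.single i (1 : ℤ) - (r i) • Pi.single (i + 1) (1 : ℤ)) ∈ segS k q r :=
    Submodule.subset_span ⟨⟨i, hi⟩, rfl⟩
  have hmk : Submodule.Quotient.mk (p := segS k q r) ((q i) • Pi.single i (1 : ℤ)) =
      Submodule.Quotient.mk ((r i) • Pi.single (i + 1) (1 : ℤ)) :=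
    (Submodule.Quotient.eq _).mpr hmem
  rw [Submodule.Quotient.mk_smul, Submodule.Quotient.mk_smul] at hmk
  rw [map_mul, map_zpow, map_inv, map_zpow, FreeGroup.lift_apply_of, FreeGroup.lift_apply_of,
    mul_inv_eq_one]
  apply Multiplicative.toAdd.injective
  rw [toAdd_zpow, toAdd_zpow]
  simpa [segF] using hmk

theorem stmt8 (k : ℕ) (q r : ℕ → ℤ) (hq : ∀ i, q i ≠ 0) (hr : ∀ i, r i ≠ 0)
    (r0 : ℤ) (hr0 : r0 ≠ 0)
    (hcop0 : ∀ j, j + 1 ≤ k → Int.gcd (q j) r0 = 1)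
    (hcop : ∀ i j, i + 1 ≤ j → j + 1 ≤ k → Int.gcd (q j) (r i) = 1) :
    Subgroup.zpowers ((PresentedGroup.of 0 : Seg k q r) ^ (r0 * ∏ i ∈ Finset.range k, q i)) =
      Subgroup.zpowers ((PresentedGroup.of 0 : Seg k q r) ^ r0) ⊓
        Subgroup.zpowers (PresentedGroup.of k : Seg k q r) := by
  classical
  apply le_antisymm
  · rw [Subgroup.zpowers_le, Subgroup.mem_inf]
    constructor
    · exact ⟨∏ i ∈ Finset.range k, q i, (zpow_mul _ r0 _).symm⟩
    · refine ⟨r0 * ∏ i ∈ Finset.range k, r i, ?_⟩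
      have hch := stmt8_chain k q r k le_rfl
      show (PresentedGroup.of k : Seg k q r) ^ (r0 * ∏ i ∈ Finset.range k, r i) =
        (PresentedGroup.of 0 : Seg k q r) ^ (r0 * ∏ i ∈ Finset.range k, q i)
      rw [mul_comm r0 (∏ i ∈ Finset.range k, r i), zpow_mul, ← hch, ← zpow_mul,
        mul_comm (∏ i ∈ Finset.range k, q i) r0]
  · intro x hx
    rw [Subgroup.mem_inf] at hx
    obtain ⟨m, hm⟩ := Subgroup.mem_zpowers_iff.mp hx.1
    obtain ⟨n, hn⟩ := Subgroup.mem_zpowers_iff.mp hx.2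
    -- transfer to the abelian quotient module
    have hxeq : ((PresentedGroup.of 0 : Seg k q r) ^ r0) ^ m = (PresentedGroup.of k) ^ n := by
      rw [hm, ← hn]
    have hφ := congrArg (PresentedGroup.toGroup (segF_rel k q r)) hxeq
    rw [map_zpow, map_zpow, map_zpow, PresentedGroup.toGroup.of, PresentedGroup.toGroup.of,
      ← zpow_mul] at hφ
    have key := congrArg Multiplicative.toAdd hφ
    rw [toAdd_zpow, toAdd_zpow] at key
    simp only [segF, toAdd_ofAdd] at key
    rw [← Submodule.Quotient.mk_smul, ← Submodule.Quotient.mk_smul] at key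
    have hmemS := (Submodule.Quotient.eq _).mp key
    obtain ⟨c, hc⟩ := (Submodule.mem_span_range_iff_exists_fun ℤ).mp hmemS
    set c' : ℕ → ℤ := fun j => if h : j < k then c ⟨j, h⟩ else 0 with hc'
    have hEval : ∀ t : ℕ,
        (if t < k then c' t * q t else 0) -
          (∑ i ∈ Finset.range k, if t = i + 1 then c' i * r i else 0) =
        (r0 * m) * (if t = 0 then 1 else 0) - n * (if t = k then 1 else 0) := by
      intro t
      have h1 := congrFun hc t
      rw [Finset.sum_apply] at h1
      have h2 : ∀ i : Fin k, (c i • segV k q r i) t =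
          (fun i : ℕ => (if t = i then c' i * q i else 0) -
            (if t = i + 1 then c' i * r i else 0)) (i : ℕ) := by
        intro i
        have hcc : c' (i : ℕ) = c i := by simp [hc', i.isLt]
        simp only [segV, Pi.smul_apply, Pi.sub_apply, Pi.single_apply, smul_eq_mul]
        split_ifs <;> simp [hcc] <;> ring
      have hL : (∑ i : Fin k, (c i • segV k q r i) t) =
          (if t < k then c' t * q t else 0) -
            ∑ i ∈ Finset.range k, if t = i + 1 then c' i * r i else 0 := by
        calc ∑ i : Fin k, (c i • segV k q r i) t
            = ∑ i : Fin k, ((fun i : ℕ => (if t = i then c' i * q i else 0) -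
                (if t = i + 1 then c' i * r i else 0)) (i : ℕ)) :=
              Finset.sum_congr rfl (fun i _ => h2 i)
          _ = ∑ i ∈ Finset.range k, ((if t = i then c' i * q i else 0) -
                (if t = i + 1 then c' i * r i else 0)) :=
              Fin.sum_univ_eq_sum_range (fun i : ℕ => (if t = i then c' i * q i else 0) -
                (if t = i + 1 then c' i * r i else 0)) k
          _ = _ := by rw [Finset.sum_sub_distrib, Finset.sum_ite_eq]
                      simp [Finset.mem_range]
      rw [hL] at h1
      simp only [Pi.sub_apply, Pi.smul_apply, smul_eq_mul, Pi.single_apply] at h1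
      exact h1
    have h0 : 0 < k → c' 0 * q 0 = r0 * m := by
      intro hk
      have h := hEval 0
      rw [if_pos hk, Finset.sum_eq_zero (fun i _ => by simp), if_pos rfl,
        if_neg (by omega : ¬(0 = k))] at h
      simpa using h
    have hstep : ∀ t, t + 1 < k → c' (t + 1) * q (t + 1) = c' t * r t := by
      intro t ht
      have h := hEval (t + 1)
      rw [if_pos ht, if_neg (by omega : ¬(t + 1 = 0)), if_neg (by omega : ¬(t + 1 = k))] at h
      have hsum : (∑ i ∈ Finset.range k, if t + 1 = i + 1 then c' i * r i else 0) =
          c' t * r t := by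
        have hif : ∀ i : ℕ, (if t + 1 = i + 1 then c' i * r i else 0) =
            (if t = i then c' i * r i else 0) := fun i => by simp only [add_left_inj]
        rw [Finset.sum_congr rfl (fun i _ => hif i),
          Finset.sum_ite_eq, if_pos (Finset.mem_range.mpr (by omega))]
      rw [hsum] at h
      linarith
    obtain ⟨s, hs⟩ := stmt8_key_div k q r hq r0 m c' hcop0 hcop h0 hstep
    refine ⟨s, ?_⟩
    show ((PresentedGroup.of 0 : Seg k q r) ^ (r0 * ∏ i ∈ Finset.range k, q i)) ^ s = x
    rw [← hm, ← zpow_mul, ← zpow_mul, hs, mul_assoc]
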